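/- For all n ≥ 1 and all k with 2k + 2 ≤ n, the coefficients of P_n ∈ ℤ[X] satisfy (n − k − 1)·(k + 1)·coeff(P_n, n − 2k − 2) = −(n − 2k)·(n − 2k − 1)·coeff(P_n, n − 2k); that is, consecutive nonzero coefficients of the Dickson polynomial of the first kind are related by the ratio −(n−2k)(n−2k−1)/((n−k−1)(k+1)). -/

import Mathlib

open Polynomial

/-- Auxiliary: unsigned coefficients of the Dickson polynomial of the first kind. -/
def dg (n k : ℕ) : ℤ :=
  ((n - k).choose k : ℤ) + if k = 0 then 0 else (((n - 1 - k).choose (k - 1) : ℕ) : ℤ)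

lemma dg_rec (n k : ℕ) (hk : 1 ≤ k) (h : 2 * k ≤ n + 2) :
    dg (n + 2) k = dg (n + 1) k + dg n (k - 1) := by
  obtain ⟨j, rfl⟩ : ∃ j, k = j + 1 := ⟨k - 1, by omega⟩
  simp only [dg, Nat.add_sub_cancel, if_neg (Nat.succ_ne_zero j)]
  have h1 : n + 2 - (j + 1) = (n - j) + 1 := by omega
  have h2 : n + 2 - 1 - (j + 1) = n - j := by omega
  have h3 : n + 1 - (j + 1) = n - j := by omega
  have h4 : n + 1 - 1 - (j + 1) = n - 1 - j := by omega
  rw [h1, h2, h3, (by omega : n - (j + 1) = n - 1 - j)]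
  rcases Nat.eq_zero_or_pos j with rfl | hj
  · simp only [if_pos rfl, Nat.sub_zero, Nat.choose_succ_succ, Nat.choose_zero_right]
    have : n = (n-1) + 1 ∨ n = 0 := by omega
    rcases this with h5 | rfl
    · rw [h5]; push_cast [Nat.choose_succ_succ]; simp; ring
    · simp
  · simp only [if_neg (by omega : ¬ j = 0)]
    have h8 : (n - j).choose j = (n - 1 - j).choose (j - 1) + (n - 1 - j).choose j := by
      have h9 := Nat.choose_succ_succ (n - 1 - j) (j - 1)
      simp only [Nat.succ_eq_add_one] at h9
      rwa [(by omega : j - 1 + 1 = j), (by omega : n - 1 - j + 1 = n - j)] at h9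
    rw [Nat.choose_succ_succ (n - j) j, h8]
    push_cast
    ring

lemma dickson_coeff_zero_of_lt : ∀ n j : ℕ, n < j → (dickson 1 (1 : ℤ) n).coeff j = 0
  | 0, j, h => by
      have h2 : dickson 1 (1 : ℤ) 0 = C 2 := by
        rw [dickson_zero]; push_cast; norm_num
      rw [h2, coeff_C, if_neg (by omega)]
  | 1, j, h => by rw [dickson_one, coeff_X, if_neg (by omega)]
  | n+2, j, h => by
      rw [dickson_add_two, C_1, one_mul, coeff_sub]
      obtain ⟨j', rfl⟩ : ∃ j', j = j' + 1 := ⟨j - 1, by omega⟩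
      rw [coeff_X_mul, dickson_coeff_zero_of_lt (n+1) j' (by omega),
        dickson_coeff_zero_of_lt n (j'+1) (by omega), sub_zero]

lemma dickson_coeff : ∀ n, 1 ≤ n → ∀ k, 2 * k ≤ n →
    (dickson 1 (1 : ℤ) n).coeff (n - 2 * k) = (-1) ^ k * dg n k
  | 1, _, k, hk => by
      obtain rfl : k = 0 := by omega
      simp [dickson_one, dg]
  | 2, _, k, hk => by
      have h2 : dickson 1 (1 : ℤ) 0 = C 2 := by
        rw [dickson_zero]; push_cast; norm_num
      have h3 : k = 0 ∨ k = 1 := by omega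
      rcases h3 with rfl | rfl <;>
      · rw [dickson_add_two, C_1, one_mul, dickson_one, h2]
        simp [dg, coeff_X]
  | n+3, _, k, hk => by
      rw [dickson_add_two, C_1, one_mul, coeff_sub]
      rcases Nat.lt_or_ge (2 * k) (n + 3) with hlt | hge
      · -- 2k ≤ n+2
        have h2 : 2 * k ≤ n + 2 := by omega
        have e1 : n + 3 - 2 * k = (n + 2 - 2 * k) + 1 := by omega
        rw [e1, coeff_X_mul]
        rcases Nat.eq_zero_or_pos k with rfl | hkpos
        · rw [dickson_coeff (n+2) (by omega) 0 (by omega),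
            dickson_coeff_zero_of_lt (n+1) (n + 2 - 2*0 + 1) (by omega)]
          simp [dg]
        · have e2 : n + 2 - 2 * k + 1 = n + 1 - 2 * (k - 1) := by omega
          rw [e2, dickson_coeff (n+2) (by omega) k h2,
            dickson_coeff (n+1) (by omega) (k-1) (by omega)]
          rw [(by omega : n + 3 = (n + 1) + 2), dg_rec (n+1) k hkpos (by omega)]
          obtain ⟨j, rfl⟩ : ∃ j, k = j + 1 := ⟨k - 1, by omega⟩
          simp only [Nat.add_sub_cancel]
          push_cast
          ring
      · -- 2k = n+3
        have hk3 : 2 * k = n + 3 := by omega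
        have hk2 : 2 ≤ k := by omega
        have e0 : n + 3 - 2 * k = 0 := by omega
        rw [e0, mul_coeff_zero, coeff_X_zero, zero_mul, zero_sub]
        have e1 : (0 : ℕ) = n + 1 - 2 * (k - 1) := by omega
        rw [e1, dickson_coeff (n+1) (by omega) (k-1) (by omega)]
        have d1 : dg (n+3) k = 2 := by
          simp only [dg, if_neg (by omega : ¬ k = 0),
            (by omega : n + 3 - k = k), (by omega : n + 3 - 1 - k = k - 1),
            Nat.choose_self]
          norm_num
        have d2 : dg (n+1) (k-1) = 2 := by
          simp only [dg, if_neg (by omega : ¬ k - 1 = 0),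
            (by omega : n + 1 - (k - 1) = k - 1), (by omega : n + 1 - 1 - (k-1) = k - 2),
            (by omega : k - 1 - 1 = k - 2), Nat.choose_self]
          norm_num
        rw [d1, d2]
        obtain ⟨j, rfl⟩ : ∃ j, k = j + 1 := ⟨k - 1, by omega⟩
        simp only [Nat.add_sub_cancel]
        push_cast
        ring

lemma dg_mul (n k : ℕ) (hk : 2 * k ≤ n) :
    ((n : ℤ) - k) * dg n k = (n : ℤ) * ((n - k).choose k : ℕ) := by
  rcases Nat.eq_zero_or_pos k with rfl | hkpos
  · simp [dg]
  · simp only [dg, if_neg (by omega : ¬ k = 0)]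
    have key : (n - k) * (n - 1 - k).choose (k - 1) = k * (n - k).choose k := by
      have h5 : n - k = (n - 1 - k) + 1 := by omega
      have h6 : k = (k - 1) + 1 := by omega
      calc (n - k) * (n - 1 - k).choose (k - 1)
          = ((n - 1 - k) + 1) * (n - 1 - k).choose (k - 1) := by rw [← h5]
        _ = ((n - 1 - k) + 1).choose ((k - 1) + 1) * ((k-1) + 1) :=
            Nat.add_one_mul_choose_eq _ _
        _ = (n - k).choose k * k := by rw [← h5, ← h6]
        _ = k * (n - k).choose k := mul_comm _ _
    have hcast : ((n : ℤ) - k) * ((n - 1 - k).choose (k - 1) : ℕ)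
        = (k : ℤ) * ((n - k).choose k : ℕ) := by
      have : ((n - k : ℕ) : ℤ) = (n : ℤ) - k := by
        push_cast [Nat.cast_sub (by omega : k ≤ n)]; ring
      rw [← this]
      exact_mod_cast congrArg (Nat.cast : ℕ → ℤ) key
    linear_combination hcast

lemma choose_ratio (n k : ℕ) (hk : 2 * k + 2 ≤ n) :
    (k + 1) * (n - k) * (n - (k+1)).choose (k + 1)
      = (n - 2 * k) * (n - 2 * k - 1) * (n - k).choose k := by
  have e1 : n - (k + 1) = n - k - 1 := by omega
  have s1 : (n - k - 1).choose (k+1) * (k+1) = (n - k - 1).choose k * (n - 2*k - 1) := by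
    rw [Nat.choose_succ_right_eq]
    congr 1; omega
  have s2 : (n - k) * (n - k - 1).choose k = (n - k).choose (k+1) * (k+1) := by
    have h := Nat.add_one_mul_choose_eq (n - k - 1) k
    rwa [(by omega : n - k - 1 + 1 = n - k)] at h
  have s3 : (n - k).choose (k+1) * (k+1) = (n - k).choose k * (n - 2*k) := by
    rw [Nat.choose_succ_right_eq]
    congr 1; omega
  rw [e1]
  calc (k + 1) * (n - k) * (n - k - 1).choose (k + 1)
      = (n - k) * ((n - k - 1).choose (k+1) * (k+1)) := by ring
    _ = (n - k) * ((n - k - 1).choose k * (n - 2*k - 1)) := by rw [s1]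
    _ = (n - 2*k - 1) * ((n - k) * (n - k - 1).choose k) := by ring
    _ = (n - 2*k - 1) * ((n - k).choose k * (n - 2*k)) := by rw [s2, s3]
    _ = (n - 2 * k) * (n - 2 * k - 1) * (n - k).choose k := by ring

theorem dickson_coeff_ratio (n k : ℕ) (hn : 1 ≤ n) (hk : 2 * k + 2 ≤ n) :
    ((n : ℤ) - k - 1) * ((k : ℤ) + 1) * (dickson 1 (1 : ℤ) n).coeff (n - 2 * k - 2)
      = -(((n : ℤ) - 2 * k) * ((n : ℤ) - 2 * k - 1)) * (dickson 1 (1 : ℤ) n).coeff (n - 2 * k) := by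
  have e1 : n - 2 * k - 2 = n - 2 * (k + 1) := by omega
  rw [e1, dickson_coeff n hn (k+1) (by omega), dickson_coeff n hn k (by omega)]
  -- reduce to identity on dg
  have key : ((n : ℤ) - k - 1) * ((k : ℤ) + 1) * dg n (k+1)
      = ((n : ℤ) - 2*k) * ((n : ℤ) - 2*k - 1) * dg n k := by
    have hne : ((n : ℤ) - k) ≠ 0 := by
      have : (k : ℤ) + 2 ≤ n := by exact_mod_cast (by omega : k + 2 ≤ n)
      omega
    apply mul_left_cancel₀ hne
    have b1 := dg_mul n (k+1) (by omega)
    have b2 := dg_mul n k (by omega)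
    have hb1 : ((n : ℤ) - k - 1) * dg n (k+1) = (n : ℤ) * ((n - (k+1)).choose (k+1) : ℕ) := by
      have : ((n : ℤ) - ((k : ℕ) + 1 : ℕ)) = (n : ℤ) - k - 1 := by push_cast; ring
      rw [← this]; exact b1
    have hc := choose_ratio n k hk
    have hcZ : ((k : ℤ) + 1) * ((n : ℤ) - k) * ((n - (k+1)).choose (k + 1) : ℕ)
        = ((n : ℤ) - 2 * k) * ((n : ℤ) - 2 * k - 1) * ((n - k).choose k : ℕ) := by
      have c1 : ((n - k : ℕ) : ℤ) = (n : ℤ) - k := by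
        push_cast [Nat.cast_sub (by omega : k ≤ n)]; ring
      have c2 : ((n - 2*k : ℕ) : ℤ) = (n : ℤ) - 2*k := by
        push_cast [Nat.cast_sub (by omega : 2*k ≤ n)]; ring
      have c3 : ((n - 2*k - 1 : ℕ) : ℤ) = (n : ℤ) - 2*k - 1 := by
        push_cast [Nat.cast_sub (by omega : 1 ≤ n - 2*k), Nat.cast_sub (by omega : 2*k ≤ n)]
        ring
      have := congrArg (Nat.cast : ℕ → ℤ) hc
      push_cast at this
      rw [c1, c2, c3] at this
      linear_combination this
    calc ((n : ℤ) - k) * (((n : ℤ) - k - 1) * ((k : ℤ) + 1) * dg n (k+1))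
        = ((k : ℤ) + 1) * ((n : ℤ) - k) * (((n : ℤ) - k - 1) * dg n (k+1)) := by ring
      _ = ((k : ℤ) + 1) * ((n : ℤ) - k) * ((n : ℤ) * ((n - (k+1)).choose (k+1) : ℕ)) := by
          rw [hb1]
      _ = (n : ℤ) * (((k : ℤ) + 1) * ((n : ℤ) - k) * ((n - (k+1)).choose (k+1) : ℕ)) := by ring
      _ = (n : ℤ) * (((n : ℤ) - 2 * k) * ((n : ℤ) - 2 * k - 1) * ((n - k).choose k : ℕ)) := by
          rw [hcZ]
      _ = ((n : ℤ) - 2*k) * ((n : ℤ) - 2*k - 1) * (((n : ℤ) - k) * dg n k) := by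
          rw [b2]; ring
      _ = ((n : ℤ) - k) * (((n : ℤ) - 2*k) * ((n : ℤ) - 2*k - 1) * dg n k) := by ring
  calc ((n : ℤ) - k - 1) * ((k : ℤ) + 1) * ((-1)^(k+1) * dg n (k+1))
      = -((-1:ℤ)^k) * (((n : ℤ) - k - 1) * ((k : ℤ) + 1) * dg n (k+1)) := by ring
    _ = -((-1:ℤ)^k) * (((n : ℤ) - 2*k) * ((n : ℤ) - 2*k - 1) * dg n k) := by rw [key]
    _ = -(((n : ℤ) - 2 * k) * ((n : ℤ) - 2 * k - 1)) * ((-1)^k * dg n k) := by ring
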